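/- Let I be a finite index set and let a, b : I → E be families of unit vectors. Then the integral over the unit sphere S², with respect to the normalized spherical measure σ/(4π), of the function v ↦ card{i ∈ I : ⟨v, a i⟩ · ⟨v, b i⟩ < 0} equals (1/π) · Σ_{i ∈ I} arccos⟨a i, b i⟩. (This is the classical formula for the expected number of silhouette edges of a polyhedron viewed from a uniformly random direction at infinity: each edge with exterior dihedral angle θ_e lies on the silhouette with probability θ_e/π.) -/

import Mathlib

open MeasureTheory Real RealInnerProductSpace

open Set
open scoped Pointwise

local notation "E3" => EuclideanSpace ℝ (Fin 3)

lemma cosIff {θ : ℝ} (hθ : θ ∈ Icc 0 π) {x : ℝ} (hx0 : 0 ≤ x) (hx2 : x < 2*π) :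
    cos x < -cos θ ↔ (π - θ < x ∧ x < π + θ) := by
  rw [← Real.cos_pi_sub]
  have hθ0 := hθ.1
  have hθπ := hθ.2
  have hpi := Real.pi_pos
  have hmem : π - θ ∈ Icc 0 π := ⟨by linarith, by linarith⟩
  rcases le_or_gt x π with hxπ | hxπ
  · constructor
    · intro h
      have h1 : π - θ < x := by
        by_contra hcon
        push_neg at hcon
        exact absurd (Real.strictAntiOn_cos.le_iff_ge hmem ⟨hx0, hxπ⟩ |>.mpr hcon) (not_le.mpr h)
      refine ⟨h1, ?_⟩
      have : cos (π - θ) > -1 := lt_of_le_of_lt (Real.neg_one_le_cos x) h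
      have hne : π - θ < π := by
        by_contra hc
        push_neg at hc
        have : π - θ = π := le_antisymm hmem.2 hc
        rw [this, Real.cos_pi] at h
        linarith [Real.neg_one_le_cos x]
      linarith
    · rintro ⟨h1, _⟩
      exact Real.strictAntiOn_cos hmem ⟨hx0, hxπ⟩ h1
  · have hcx : cos x = cos (2*π - x) := by
      rw [← Real.cos_two_pi_sub]
    have hymem : 2*π - x ∈ Icc 0 π := ⟨by linarith, by linarith⟩
    rw [hcx]
    constructor
    · intro h
      have h1 : π - θ < 2*π - x := by
        by_contra hcon
        push_neg at hcon
        exact absurd (Real.strictAntiOn_cos.le_iff_ge hmem ⟨hymem.1, hymem.2⟩ |>.mpr hcon)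
          (not_le.mpr h)
      constructor
      · have : cos (π - θ) > -1 := lt_of_le_of_lt (Real.neg_one_le_cos _) h
        have hne : π - θ < π := by
          by_contra hc
          push_neg at hc
          have : π - θ = π := le_antisymm hmem.2 hc
          rw [this, Real.cos_pi] at h
          linarith [Real.neg_one_le_cos (2*π - x)]
        linarith
      · linarith
    · rintro ⟨_, h2⟩
      exact Real.strictAntiOn_cos hmem hymem (by linarith)

lemma Aset {θ : ℝ} (hθ : θ ∈ Icc 0 π) :
    {φ : ℝ | φ ∈ Ioo (-π) π ∧ cos (2*φ) < -cos θ}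
      = Ioo ((π-θ)/2) ((π+θ)/2) ∪ Ioo (-((π+θ)/2)) (-((π-θ)/2)) := by
  have hθ0 := hθ.1; have hθπ := hθ.2; have hpi := Real.pi_pos
  ext φ
  simp only [mem_setOf_eq, mem_Ioo, mem_union]
  constructor
  · rintro ⟨⟨h1, h2⟩, h3⟩
    have habs : cos (2*|φ|) = cos (2*φ) := by
      rcases abs_cases φ with ⟨h, _⟩ | ⟨h, _⟩
      · rw [h]
      · rw [h]; rw [mul_neg, Real.cos_neg]
    have := (cosIff hθ (x := 2*|φ|) (by positivity) (by
      rcases abs_cases φ with ⟨h, _⟩ | ⟨h, _⟩ <;> rw [h] <;> linarith)).mp (by rw [habs]; exact h3)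
    rcases abs_cases φ with ⟨h, _⟩ | ⟨h, _⟩
    · left; rw [h] at this; constructor <;> linarith [this.1, this.2]
    · right; rw [h] at this; constructor <;> linarith [this.1, this.2]
  · rintro (⟨h1, h2⟩ | ⟨h1, h2⟩)
    · have hφ0 : 0 ≤ φ := by linarith
      refine ⟨⟨by linarith, by linarith⟩, ?_⟩
      exact (cosIff hθ (by linarith) (by linarith)).mpr ⟨by linarith, by linarith⟩
    · have hφ0 : φ ≤ 0 := by linarith
      refine ⟨⟨by linarith, by linarith⟩, ?_⟩
      have : cos (2*φ) = cos (2*(-φ)) := by rw [mul_neg, Real.cos_neg]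
      rw [this]
      exact (cosIff hθ (by linarith) (by linarith)).mpr ⟨by linarith, by linarith⟩

lemma volA {θ : ℝ} (hθ : θ ∈ Icc 0 π) :
    volume {φ : ℝ | φ ∈ Ioo (-π) π ∧ cos (2*φ) < -cos θ} = ENNReal.ofReal (2*θ) := by
  have hθ0 := hθ.1; have hθπ := hθ.2; have hpi := Real.pi_pos
  rw [Aset hθ]
  rw [measure_union (by
      apply Set.disjoint_left.mpr
      rintro x ⟨hx1, _⟩ ⟨_, hx4⟩
      linarith) measurableSet_Ioo]
  rw [Real.volume_Ioo, Real.volume_Ioo]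
  rw [← ENNReal.ofReal_add (by linarith) (by linarith)]
  congr 1
  ring

set_option maxHeartbeats 1000000 in
lemma area2 {θ : ℝ} (hθ : θ ∈ Icc 0 π) {R : ℝ} (hR : 0 ≤ R) :
    volume {p : ℝ × ℝ | p.1^2 + p.2^2 < R^2 ∧
      (cos (θ/2) * p.1 + sin (θ/2) * p.2) * (cos (θ/2) * p.1 - sin (θ/2) * p.2) < 0}
      = ENNReal.ofReal (θ * R^2) := by
  have hθ0 := hθ.1; have hθπ := hθ.2; have hpi := Real.pi_pos
  set c := cos (θ/2) with hc
  set s := sin (θ/2) with hs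
  set T : Set (ℝ × ℝ) := {p : ℝ × ℝ | p.1^2 + p.2^2 < R^2 ∧
      (c * p.1 + s * p.2) * (c * p.1 - s * p.2) < 0} with hT
  set A' : Set ℝ := {φ : ℝ | φ ∈ Ioo (-π) π ∧ cos (2*φ) < -cos θ} with hA'
  have hTopen : IsOpen T := by
    have : T = {p : ℝ × ℝ | p.1^2 + p.2^2 < R^2} ∩
        {p : ℝ × ℝ | (c * p.1 + s * p.2) * (c * p.1 - s * p.2) < 0} := rfl
    rw [this]
    exact (isOpen_lt (by fun_prop) continuous_const).inter
      (isOpen_lt (by fun_prop) continuous_const)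
  have hTmeas : MeasurableSet T := hTopen.measurableSet
  have hA'meas : MeasurableSet A' := by
    rw [hA', Aset hθ]; exact measurableSet_Ioo.union measurableSet_Ioo
  have hfin : volume T ≠ ⊤ := by
    have hsub : T ⊆ Icc (-R) R ×ˢ Icc (-R) R := by
      rintro ⟨x, y⟩ ⟨h1, _⟩
      constructor
      · constructor <;> nlinarith [sq_nonneg y]
      · constructor <;> nlinarith [sq_nonneg x]
    refine ne_top_of_le_ne_top ?_ (measure_mono hsub)
    rw [MeasureTheory.Measure.volume_eq_prod, Measure.prod_prod]
    exact ENNReal.mul_ne_top (by simp) (by simp)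
  -- key pointwise identity on polarCoord.target
  have hset : ∀ p ∈ polarCoord.target, (polarCoord.symm p ∈ T ↔ p ∈ Ioo 0 R ×ˢ A') := by
    rintro ⟨r, φ⟩ hp
    rw [polarCoord_target] at hp
    obtain ⟨hr, hφ⟩ := hp
    simp only [mem_Ioi] at hr
    have hsc := Real.sin_sq_add_cos_sq φ
    have hnorm : (r * cos φ)^2 + (r * sin φ)^2 = r^2 := by nlinarith
    have hc2 : c^2 = 1/2 + cos θ / 2 := by
      rw [hc, Real.cos_sq, mul_div_cancel₀ _ (two_ne_zero)]
    have hs2 : s^2 = 1/2 - cos θ / 2 := by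
      have := Real.sin_sq_add_cos_sq (θ/2)
      rw [hs]; nlinarith
    have h2φ : cos (2*φ) = 2 * cos φ ^ 2 - 1 := Real.cos_two_mul φ
    have hprod : (c * (r * cos φ) + s * (r * sin φ)) * (c * (r * cos φ) - s * (r * sin φ))
        = r^2 * ((cos (2*φ) + cos θ)/2) := by nlinarith [sq_nonneg r]
    simp only [T, polarCoord_symm_apply, mem_setOf_eq, Set.mem_prod, mem_Ioo]
    rw [hnorm, hprod]
    constructor
    · rintro ⟨h1, h2⟩
      refine ⟨⟨hr, ?_⟩, ⟨hφ, ?_⟩⟩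
      · nlinarith
      · nlinarith [sq_nonneg r]
    · rintro ⟨⟨h1, h2⟩, ⟨_, h4⟩⟩
      refine ⟨by nlinarith, ?_⟩
      have : (cos (2*φ) + cos θ)/2 < 0 := by linarith
      exact mul_neg_of_pos_of_neg (by positivity) this
  have hpt : ∀ p ∈ polarCoord.target,
      p.1 • T.indicator (fun _ => (1:ℝ)) (polarCoord.symm p)
        = (Ioo 0 R ×ˢ A').indicator (fun q : ℝ × ℝ => q.1) p := by
    intro p hp
    by_cases hmem : p ∈ Ioo 0 R ×ˢ A'
    · rw [Set.indicator_of_mem hmem, Set.indicator_of_mem ((hset p hp).mpr hmem),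
        smul_eq_mul, mul_one]
    · rw [Set.indicator_of_notMem hmem,
        Set.indicator_of_notMem (fun h => hmem ((hset p hp).mp h)), smul_zero]
  have h1 : (volume T).toReal = ∫ p : ℝ × ℝ, T.indicator (fun _ => (1:ℝ)) p :=
    (integral_indicator_one hTmeas).symm
  rw [← integral_comp_polarCoord_symm] at h1
  rw [setIntegral_congr_fun polarCoord.open_target.measurableSet hpt] at h1
  rw [setIntegral_indicator (measurableSet_Ioo.prod hA'meas)] at h1
  have hsub2 : Ioo 0 R ×ˢ A' ⊆ polarCoord.target := by
    rw [polarCoord_target]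
    exact Set.prod_mono Ioo_subset_Ioi_self (fun x hx => hx.1)
  rw [Set.inter_eq_self_of_subset_right hsub2] at h1
  rw [MeasureTheory.Measure.volume_eq_prod, ← Measure.prod_restrict] at h1
  have h2 : (∫ p : ℝ × ℝ, p.1 ∂((volume.restrict (Ioo 0 R)).prod (volume.restrict A')))
      = (∫ x in Ioo (0:ℝ) R, x) * (∫ _ in A', (1:ℝ)) := by
    rw [← integral_prod_mul (f := fun x : ℝ => x) (g := fun _ : ℝ => (1:ℝ))]
    simp only [mul_one]
  rw [h2] at h1
  have hI1 : (∫ x in Ioo (0:ℝ) R, x) = R^2/2 := by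
    rw [← integral_Ioc_eq_integral_Ioo, ← intervalIntegral.integral_of_le hR, integral_id]
    ring
  have hI2 : (∫ _ in A', (1:ℝ)) = 2*θ := by
    rw [setIntegral_const, measureReal_def, volA hθ, ENNReal.toReal_ofReal (by linarith), smul_eq_mul, mul_one]
  rw [hI1, hI2] at h1
  rw [← MeasureTheory.Measure.volume_eq_prod] at h1
  rw [← ENNReal.ofReal_toReal hfin, h1]
  congr 1
  ring

set_option maxHeartbeats 1000000 in
lemma vol3 {θ : ℝ} (hθ : θ ∈ Icc 0 π) :
    volume {y : ℝ × (ℝ × ℝ) | y.1^2 + (y.2.1^2 + y.2.2^2) < 1 ∧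
      (cos (θ/2) * y.2.1 + sin (θ/2) * y.2.2) * (cos (θ/2) * y.2.1 - sin (θ/2) * y.2.2) < 0}
      = ENNReal.ofReal (θ * (4/3)) := by
  have hθ0 := hθ.1; have hθπ := hθ.2
  set c := cos (θ/2) with hc
  set s := sin (θ/2) with hs
  set W : Set (ℝ × (ℝ × ℝ)) := {y : ℝ × (ℝ × ℝ) | y.1^2 + (y.2.1^2 + y.2.2^2) < 1 ∧
      (c * y.2.1 + s * y.2.2) * (c * y.2.1 - s * y.2.2) < 0} with hW
  have hWopen : IsOpen W := by
    have : W = {y : ℝ × (ℝ × ℝ) | y.1^2 + (y.2.1^2 + y.2.2^2) < 1} ∩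
        {y : ℝ × (ℝ × ℝ) | (c * y.2.1 + s * y.2.2) * (c * y.2.1 - s * y.2.2) < 0} := rfl
    rw [this]
    exact (isOpen_lt (by fun_prop) continuous_const).inter
      (isOpen_lt (by fun_prop) continuous_const)
  have hWmeas : MeasurableSet W := hWopen.measurableSet
  rw [MeasureTheory.Measure.volume_eq_prod, Measure.prod_apply hWmeas]
  have hpre : ∀ z : ℝ, volume (Prod.mk z ⁻¹' W)
      = ENNReal.ofReal (θ * (Real.sqrt (1 - z^2))^2) := by
    intro z
    have : (Prod.mk z ⁻¹' W) = {p : ℝ × ℝ | p.1^2 + p.2^2 < (Real.sqrt (1 - z^2))^2 ∧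
        (c * p.1 + s * p.2) * (c * p.1 - s * p.2) < 0} := by
      by_cases hz : 0 ≤ 1 - z^2
      · rw [Real.sq_sqrt hz]
        ext p
        simp only [W, mem_preimage, mem_setOf_eq]
        constructor
        · rintro ⟨h1, h2⟩; exact ⟨by linarith, h2⟩
        · rintro ⟨h1, h2⟩; exact ⟨by linarith, h2⟩
      · push_neg at hz
        have hz0 : Real.sqrt (1 - z^2) = 0 := Real.sqrt_eq_zero_of_nonpos (by linarith)
        ext p
        simp only [W, mem_preimage, mem_setOf_eq, hz0]
        constructor
        · rintro ⟨h1, _⟩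
          exfalso; nlinarith [sq_nonneg p.1, sq_nonneg p.2]
        · rintro ⟨h1, _⟩
          exfalso; nlinarith [sq_nonneg p.1, sq_nonneg p.2]
    rw [this]
    exact area2 hθ (Real.sqrt_nonneg _)
  simp only [hpre]
  have hind : (fun z : ℝ => ENNReal.ofReal (θ * (Real.sqrt (1 - z^2))^2))
      = (Ioo (-1:ℝ) 1).indicator (fun z => ENNReal.ofReal (θ * (1 - z^2))) := by
    ext z
    by_cases hz : z ∈ Ioo (-1:ℝ) 1
    · rw [Set.indicator_of_mem hz]
      obtain ⟨h1, h2⟩ := hz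
      rw [Real.sq_sqrt (by nlinarith)]
    · rw [Set.indicator_of_notMem hz]
      simp only [mem_Ioo, not_and_or, not_lt] at hz
      have : Real.sqrt (1 - z^2) = 0 := by
        apply Real.sqrt_eq_zero_of_nonpos
        rcases hz with h | h <;> nlinarith
      rw [this]
      simp
  rw [hind, lintegral_indicator measurableSet_Ioo]
  rw [← ofReal_integral_eq_lintegral_ofReal]
  · congr 1
    rw [← integral_Ioc_eq_integral_Ioo, ← intervalIntegral.integral_of_le (by norm_num : (-1:ℝ) ≤ 1)]
    rw [intervalIntegral.integral_const_mul]
    rw [intervalIntegral.integral_sub intervalIntegrable_const (intervalIntegral.intervalIntegrable_pow 2)]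
    rw [_root_.integral_one, _root_.integral_pow]
    norm_num
  · apply (Continuous.integrableOn_Icc (by fun_prop)).mono_set Ioo_subset_Icc_self
  · filter_upwards [ae_restrict_mem measurableSet_Ioo] with z hz
    have := hz.1; have := hz.2
    apply mul_nonneg hθ0
    nlinarith

set_option maxHeartbeats 1000000 in
lemma exists_onb (a b : E3) (ha : ‖a‖ = 1) (hb : ‖b‖ = 1) :
    ∃ B : OrthonormalBasis (Fin 3) ℝ E3,
      a = cos (arccos ⟪a,b⟫ / 2) • B 0 + sin (arccos ⟪a,b⟫ / 2) • B 1 ∧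
      b = cos (arccos ⟪a,b⟫ / 2) • B 0 - sin (arccos ⟪a,b⟫ / 2) • B 1 := by
  have hcard : Module.finrank ℝ E3 = Fintype.card (Fin 3) := by simp
  set t := ⟪a,b⟫ with ht
  have htle : |t| ≤ 1 := by
    have := abs_real_inner_le_norm a b
    rwa [ha, hb, one_mul] at this
  have ht1 : t ≤ 1 := (abs_le.mp htle).2
  have ht2 : -1 ≤ t := (abs_le.mp htle).1
  rcases eq_or_lt_of_le ht1 with heq1 | hlt1
  · -- t = 1 : a = b
    have hab : a = b := (inner_eq_one_iff_of_norm_eq_one ha hb).mp heq1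
    have hv : Orthonormal ℝ (({0} : Set (Fin 3)).restrict (fun _ => a)) := by
      refine ⟨fun i => ha, fun i j hij => ?_⟩
      exact absurd (Subtype.ext (i.2.trans j.2.symm)) hij
    obtain ⟨B, hB⟩ := hv.exists_orthonormalBasis_extension_of_card_eq hcard
    have hB0 : B 0 = a := hB 0 rfl
    refine ⟨B, ?_, ?_⟩ <;>
      simp [heq1, Real.arccos_one, hB0, ← hab]
  rcases eq_or_lt_of_le ht2 with heq2 | hlt2
  · -- t = -1 : b = -a
    have hab : a = -b := by
      have h1 : ⟪a, -b⟫ = 1 := by rw [inner_neg_right, ← ht, ← heq2]; norm_num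
      exact (inner_eq_one_iff_of_norm_eq_one ha (by rw [norm_neg]; exact hb)).mp h1
    have hv : Orthonormal ℝ (({1} : Set (Fin 3)).restrict (fun _ => a)) := by
      refine ⟨fun i => ha, fun i j hij => ?_⟩
      exact absurd (Subtype.ext (i.2.trans j.2.symm)) hij
    obtain ⟨B, hB⟩ := hv.exists_orthonormalBasis_extension_of_card_eq hcard
    have hB1 : B 1 = a := hB 1 rfl
    have harc : arccos t = π := by rw [← heq2]; exact Real.arccos_neg_one
    have hbe : b = -a := by rw [hab]; simp
    refine ⟨B, ?_, ?_⟩ <;>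
      rw [harc] <;> simp [Real.cos_pi_div_two, Real.sin_pi_div_two, hB1, hbe]
  -- -1 < t < 1
  have hpi := Real.pi_pos
  have hnadd : ‖a+b‖^2 = 2 + 2*t := by
    rw [@norm_add_sq_real, ha, hb, ← ht]; ring
  have hnsub : ‖a-b‖^2 = 2 - 2*t := by
    rw [@norm_sub_sq_real, ha, hb, ← ht]; ring
  have haddne : ‖a+b‖ ≠ 0 := by intro h; rw [h] at hnadd; nlinarith
  have hsubne : ‖a-b‖ ≠ 0 := by intro h; rw [h] at hnsub; nlinarith
  set f0 : E3 := ‖a+b‖⁻¹ • (a+b) with hf0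
  set f1 : E3 := ‖a-b‖⁻¹ • (a-b) with hf1
  have hnf0 : ‖f0‖ = 1 := by
    rw [hf0, norm_smul, norm_inv, norm_norm, inv_mul_cancel₀ haddne]
  have hnf1 : ‖f1‖ = 1 := by
    rw [hf1, norm_smul, norm_inv, norm_norm, inv_mul_cancel₀ hsubne]
  have hinner : ⟪f0, f1⟫ = 0 := by
    rw [hf0, hf1, real_inner_smul_left, real_inner_smul_right]
    have : ⟪a+b, a-b⟫ = 0 := by
      rw [inner_sub_right, inner_add_left, inner_add_left,
        real_inner_self_eq_norm_sq, real_inner_self_eq_norm_sq, ha, hb, real_inner_comm b a]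
      ring
    rw [this]; ring
  set v : Fin 3 → E3 := ![f0, f1, 0] with hv
  have hvo : Orthonormal ℝ (({0, 1} : Set (Fin 3)).restrict v) := by
    refine ⟨?_, ?_⟩
    · rintro ⟨i, hi⟩
      rcases hi with rfl | hi
      · simpa [hv, Set.restrict] using hnf0
      · rw [mem_singleton_iff] at hi; subst hi; simpa [hv, Set.restrict] using hnf1
    · rintro ⟨i, hi⟩ ⟨j, hj⟩ hij
      have hne : i ≠ j := fun h => hij (Subtype.ext h)
      rcases hi with rfl | hi <;> rcases hj with rfl | hj
      · exact absurd rfl hne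
      · rw [mem_singleton_iff] at hj; subst hj; simpa [hv, Set.restrict] using hinner
      · rw [mem_singleton_iff] at hi; subst hi
        have h10 : ⟪f1, f0⟫ = 0 := by rw [real_inner_comm]; exact hinner
        simpa [hv, Set.restrict] using h10
      · rw [mem_singleton_iff] at hi hj; subst hi; subst hj; exact absurd rfl hne
  obtain ⟨B, hB⟩ := hvo.exists_orthonormalBasis_extension_of_card_eq hcard
  have hB0 : B 0 = f0 := by simpa [hv] using hB 0 (by simp)
  have hB1 : B 1 = f1 := by simpa [hv] using hB 1 (by simp)
  set θ := arccos t with hθdef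
  have hθ0 : 0 ≤ θ := Real.arccos_nonneg t
  have hθπ : θ ≤ π := Real.arccos_le_pi t
  have hcosθ : cos θ = t := Real.cos_arccos ht2 ht1
  have hc2 : cos (θ/2)^2 = (1+t)/2 := by
    rw [Real.cos_sq, mul_div_cancel₀ _ (two_ne_zero), hcosθ]; ring
  have hs2 : sin (θ/2)^2 = (1-t)/2 := by
    have := Real.sin_sq_add_cos_sq (θ/2)
    nlinarith
  have hcnn : 0 ≤ cos (θ/2) := Real.cos_nonneg_of_mem_Icc ⟨by linarith, by linarith⟩
  have hsnn : 0 ≤ sin (θ/2) := Real.sin_nonneg_of_nonneg_of_le_pi (by linarith) (by linarith)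
  have hkey0 : cos (θ/2) * ‖a+b‖⁻¹ = 1/2 := by
    have hn : 0 ≤ ‖a+b‖⁻¹ := inv_nonneg.mpr (norm_nonneg _)
    have hsq : (cos (θ/2) * ‖a+b‖⁻¹)^2 = 1/4 := by
      have h2t : 2 + 2*t ≠ 0 := by nlinarith
      have h1t : (1:ℝ) + t ≠ 0 := by intro h; apply h2t; linarith
      rw [mul_pow, hc2, inv_pow, hnadd]
      field_simp [h2t, h1t]
      ring
    nlinarith [mul_nonneg hcnn hn]
  have hkey1 : sin (θ/2) * ‖a-b‖⁻¹ = 1/2 := by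
    have hn : 0 ≤ ‖a-b‖⁻¹ := inv_nonneg.mpr (norm_nonneg _)
    have hsq : (sin (θ/2) * ‖a-b‖⁻¹)^2 = 1/4 := by
      have h2t : 2 - 2*t ≠ 0 := by nlinarith
      rw [mul_pow, hs2, inv_pow, hnsub]
      field_simp [h2t]
      ring
    nlinarith [mul_nonneg hsnn hn]
  refine ⟨B, ?_, ?_⟩
  · rw [hB0, hB1, hf0, hf1, smul_smul, smul_smul, hkey0, hkey1]
    module
  · rw [hB0, hB1, hf0, hf1, smul_smul, smul_smul, hkey0, hkey1]
    module

set_option maxHeartbeats 1000000 in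
lemma key_measure (a b : E3) (ha : ‖a‖ = 1) (hb : ‖b‖ = 1) :
    (volume : Measure E3).toSphere
      {v : Metric.sphere (0 : E3) 1 | ⟪(v : E3), a⟫ * ⟪(v : E3), b⟫ < 0}
      = ENNReal.ofReal (4 * arccos ⟪a,b⟫) := by
  obtain ⟨B, hAdec, hBdec⟩ := exists_onb a b ha hb
  set θ := arccos ⟪a,b⟫ with hθdef
  have hθmem : θ ∈ Icc 0 π := ⟨Real.arccos_nonneg _, Real.arccos_le_pi _⟩
  set c := cos (θ/2) with hc
  set s := sin (θ/2) with hs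
  set S : Set (Metric.sphere (0 : E3) 1) :=
    {v : Metric.sphere (0 : E3) 1 | ⟪(v : E3), a⟫ * ⟪(v : E3), b⟫ < 0} with hS
  have hSmeas : MeasurableSet S := by
    refine (isOpen_lt ?_ continuous_const).measurableSet
    exact (continuous_subtype_val.inner continuous_const).mul
      (continuous_subtype_val.inner continuous_const)
  rw [MeasureTheory.Measure.toSphere_apply' (volume : Measure (EuclideanSpace ℝ (Fin 3))) hSmeas]
  -- identify the cone
  set W : Set E3 := {x : E3 | ‖x‖ < 1 ∧ ⟪x, a⟫ * ⟪x, b⟫ < 0} with hW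
  have hcone : Ioo (0:ℝ) 1 • (Subtype.val '' S) = W := by
    ext x
    constructor
    · rintro ⟨r, hr, y, ⟨v, hvS, rfl⟩, rfl⟩
      have hvn : ‖(v : E3)‖ = 1 := mem_sphere_zero_iff_norm.mp v.2
      constructor
      · rw [norm_smul, hvn, mul_one, Real.norm_eq_abs, abs_of_pos hr.1]
        exact hr.2
      · rw [real_inner_smul_left, real_inner_smul_left]
        have : r * ⟪(v:E3), a⟫ * (r * ⟪(v:E3), b⟫) = r^2 * (⟪(v:E3), a⟫ * ⟪(v:E3), b⟫) := by ring
        rw [this]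
        exact mul_neg_of_pos_of_neg (pow_pos hr.1 2) hvS
    · rintro ⟨hx1, hx2⟩
      have hx0 : x ≠ 0 := by
        intro h; rw [h] at hx2; simp at hx2
      have hnx : 0 < ‖x‖ := norm_pos_iff.mpr hx0
      have hmem : ‖x‖⁻¹ • x ∈ Metric.sphere (0:E3) 1 :=
        mem_sphere_zero_iff_norm.mpr (norm_smul_inv_norm hx0)
      refine ⟨‖x‖, ⟨hnx, hx1⟩, ‖x‖⁻¹ • x, ⟨⟨‖x‖⁻¹ • x, hmem⟩, ?_, rfl⟩, ?_⟩
      · show ⟪‖x‖⁻¹ • x, a⟫ * ⟪‖x‖⁻¹ • x, b⟫ < 0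
        rw [real_inner_smul_left, real_inner_smul_left]
        have : ‖x‖⁻¹ * ⟪x, a⟫ * (‖x‖⁻¹ * ⟪x, b⟫) = (‖x‖⁻¹)^2 * (⟪x, a⟫ * ⟪x, b⟫) := by ring
        rw [this]
        exact mul_neg_of_pos_of_neg (by positivity) hx2
      · show ‖x‖ • ‖x‖⁻¹ • x = x
        rw [smul_smul, mul_inv_cancel₀ (ne_of_gt hnx), one_smul]
  rw [hcone]
  -- move to coordinates via the orthonormal basis
  set W₂ : Set E3 := {y : E3 | (y 2)^2 + ((y 0)^2 + (y 1)^2) < 1 ∧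
      (c * y 0 + s * y 1) * (c * y 0 - s * y 1) < 0} with hW₂
  have hW₂open : IsOpen W₂ := by
    have : W₂ = {y : E3 | (y 2)^2 + ((y 0)^2 + (y 1)^2) < 1} ∩
        {y : E3 | (c * y 0 + s * y 1) * (c * y 0 - s * y 1) < 0} := rfl
    rw [this]
    refine (isOpen_lt ?_ continuous_const).inter (isOpen_lt ?_ continuous_const) <;> fun_prop
  have hWpre : W = B.repr ⁻¹' W₂ := by
    ext x
    have hrepr : ∀ i, B.repr x i = ⟪x, B i⟫ := by
      intro i; rw [B.repr_apply_apply, real_inner_comm]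
    have hna : ⟪x, a⟫ = c * B.repr x 0 + s * B.repr x 1 := by
      rw [hAdec, inner_add_right, real_inner_smul_right, real_inner_smul_right,
        hrepr 0, hrepr 1]
    have hnb : ⟪x, b⟫ = c * B.repr x 0 - s * B.repr x 1 := by
      rw [hBdec, inner_sub_right, real_inner_smul_right, real_inner_smul_right,
        hrepr 0, hrepr 1]
    have hnorm : ‖x‖^2 = (B.repr x 2)^2 + ((B.repr x 0)^2 + (B.repr x 1)^2) := by
      rw [← B.repr.norm_map x]
      rw [EuclideanSpace.norm_eq]
      rw [Real.sq_sqrt (by positivity)]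
      rw [Fin.sum_univ_three]
      simp [Real.norm_eq_abs, sq_abs]
      ring
    simp only [hW, hW₂, mem_preimage, mem_setOf_eq, hna, hnb, ← hnorm]
    constructor
    · rintro ⟨h1, h2⟩
      exact ⟨by nlinarith [norm_nonneg x], h2⟩
    · rintro ⟨h1, h2⟩
      exact ⟨by nlinarith [norm_nonneg x], h2⟩
  rw [hWpre, (B.measurePreserving_repr).measure_preimage hW₂open.measurableSet.nullMeasurableSet]
  -- move to ℝ × (ℝ × ℝ)
  set W₃ : Set (ℝ × (ℝ × ℝ)) := {y : ℝ × (ℝ × ℝ) | y.1^2 + (y.2.1^2 + y.2.2^2) < 1 ∧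
      (c * y.2.1 + s * y.2.2) * (c * y.2.1 - s * y.2.2) < 0} with hW₃
  have hW₃open : IsOpen W₃ := by
    have : W₃ = {y : ℝ × (ℝ × ℝ) | y.1^2 + (y.2.1^2 + y.2.2^2) < 1} ∩
        {y : ℝ × (ℝ × ℝ) | (c * y.2.1 + s * y.2.2) * (c * y.2.1 - s * y.2.2) < 0} := rfl
    rw [this]
    refine (isOpen_lt ?_ continuous_const).inter (isOpen_lt ?_ continuous_const) <;> fun_prop
  set Ψ : E3 ≃ᵐ ℝ × (ℝ × ℝ) :=
    (MeasurableEquiv.toLp 2 (Fin 3 → ℝ)).symm.trans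
      ((MeasurableEquiv.piFinSuccAbove (fun _ : Fin 3 => ℝ) 2).trans
        ((MeasurableEquiv.refl ℝ).prodCongr (MeasurableEquiv.finTwoArrow))) with hΨ
  have hΨmp : MeasurePreserving Ψ volume volume := by
    have hcomp : MeasurePreserving
        ((⇑((MeasurableEquiv.refl ℝ).prodCongr (MeasurableEquiv.finTwoArrow)) ∘
          ⇑(MeasurableEquiv.piFinSuccAbove (fun _ : Fin 3 => ℝ) 2)) ∘
          ⇑(MeasurableEquiv.toLp 2 (Fin 3 → ℝ)).symm) volume volume := by
      apply MeasurePreserving.comp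
      · apply MeasurePreserving.comp
        · have h3 := (MeasurePreserving.id (volume : Measure ℝ)).prod
            (volume_preserving_finTwoArrow ℝ)
          have heq : ⇑((MeasurableEquiv.refl ℝ).prodCongr (MeasurableEquiv.finTwoArrow))
              = Prod.map id ⇑(MeasurableEquiv.finTwoArrow (α := ℝ)) := rfl
          rw [heq]
          exact h3
        · exact volume_preserving_piFinSuccAbove (fun _ : Fin 3 => ℝ) 2
      · exact EuclideanSpace.volume_preserving_symm_measurableEquiv_toLp (Fin 3)
    exact hcomp
  have hΨapp : ∀ y : E3, Ψ y = (y 2, (y 0, y 1)) := fun y => rfl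
  have hW₂pre : W₂ = Ψ ⁻¹' W₃ := by
    ext y
    simp only [mem_preimage, hΨapp, hW₂, hW₃, mem_setOf_eq]
  rw [hW₂pre, hΨmp.measure_preimage hW₃open.measurableSet.nullMeasurableSet]
  rw [vol3 hθmem]
  have hdim : (Module.finrank ℝ E3 : ENNReal) = (3:ℕ) := by
    norm_cast
    simp
  rw [hdim]
  rw [show ((3:ℕ) : ENNReal) = ENNReal.ofReal (3:ℝ) by simp]
  rw [← ENNReal.ofReal_mul (by norm_num)]
  congr 1
  ring

/-- The expected number of silhouette edges of a polyhedron, for a viewpoint chosen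
uniformly at random at infinity (i.e. averaging over the unit sphere of directions with
the normalized spherical measure `σ / (4π)`), equals `(1/π) · Σ_e θ_e` where
`θ_e = arccos ⟨a e, b e⟩` is the exterior dihedral angle of edge `e` with adjacent
outward face normals `a e` and `b e`. -/
theorem expected_silhouette_size {I : Type*} [Fintype I]
    (a b : I → EuclideanSpace ℝ (Fin 3))
    (ha : ∀ i, ‖a i‖ = 1) (hb : ∀ i, ‖b i‖ = 1) :
    (∫ v : Metric.sphere (0 : EuclideanSpace ℝ (Fin 3)) 1,
        (Nat.card {i : I //
          ⟪(v : EuclideanSpace ℝ (Fin 3)), a i⟫ * ⟪(v : EuclideanSpace ℝ (Fin 3)), b i⟫ < 0} : ℝ)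
        ∂((ENNReal.ofReal (4 * π))⁻¹ • (volume : Measure (EuclideanSpace ℝ (Fin 3))).toSphere))
      = (1 / π) * ∑ i, Real.arccos ⟪a i, b i⟫ := by
  classical
  have hpi := Real.pi_pos
  set σ := (volume : Measure (EuclideanSpace ℝ (Fin 3))).toSphere with hσ
  set μ := (ENNReal.ofReal (4 * π))⁻¹ • σ with hμ
  have hμfin : IsFiniteMeasure μ := by
    constructor
    rw [hμ, Measure.smul_apply, smul_eq_mul]
    exact ENNReal.mul_lt_top (ENNReal.inv_lt_top.mpr (ENNReal.ofReal_pos.mpr (by positivity)))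
      (measure_lt_top σ _)
  set S : I → Set (Metric.sphere (0 : EuclideanSpace ℝ (Fin 3)) 1) := fun i =>
    {v : Metric.sphere (0 : EuclideanSpace ℝ (Fin 3)) 1 |
      ⟪(v : EuclideanSpace ℝ (Fin 3)), a i⟫ * ⟪(v : EuclideanSpace ℝ (Fin 3)), b i⟫ < 0} with hSdef
  have hSmeas : ∀ i, MeasurableSet (S i) := by
    intro i
    refine (isOpen_lt ?_ continuous_const).measurableSet
    exact (continuous_subtype_val.inner continuous_const).mul
      (continuous_subtype_val.inner continuous_const)
  have hcount : ∀ v : Metric.sphere (0 : EuclideanSpace ℝ (Fin 3)) 1,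
      (Nat.card {i : I //
        ⟪(v : EuclideanSpace ℝ (Fin 3)), a i⟫ * ⟪(v : EuclideanSpace ℝ (Fin 3)), b i⟫ < 0} : ℝ)
      = ∑ i, (S i).indicator (fun _ => (1:ℝ)) v := by
    intro v
    rw [Nat.card_eq_fintype_card, Fintype.card_subtype, Finset.card_filter]
    push_cast
    apply Finset.sum_congr rfl
    intro i _
    by_cases h : v ∈ S i
    · rw [Set.indicator_of_mem h]; exact if_pos h
    · rw [Set.indicator_of_notMem h]; exact if_neg h
  calc (∫ v, (Nat.card {i : I //
          ⟪(v : EuclideanSpace ℝ (Fin 3)), a i⟫ * ⟪(v : EuclideanSpace ℝ (Fin 3)), b i⟫ < 0} : ℝ) ∂μ)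
      = ∫ v, ∑ i, (S i).indicator (fun _ => (1:ℝ)) v ∂μ := by
        exact integral_congr_ae (Filter.Eventually.of_forall hcount)
    _ = ∑ i, ∫ v, (S i).indicator (fun _ => (1:ℝ)) v ∂μ := by
        apply integral_finset_sum
        intro i _
        exact (integrable_const (1:ℝ)).indicator (hSmeas i)
    _ = ∑ i, (μ (S i)).toReal := by
        apply Finset.sum_congr rfl
        intro i _
        exact integral_indicator_one (hSmeas i)
    _ = ∑ i, (1/π) * arccos ⟪a i, b i⟫ := by
        apply Finset.sum_congr rfl
        intro i _
        rw [hμ, Measure.smul_apply, smul_eq_mul, hσ, key_measure (a i) (b i) (ha i) (hb i)]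
        rw [ENNReal.toReal_mul, ENNReal.toReal_inv, ENNReal.toReal_ofReal (by positivity),
          ENNReal.toReal_ofReal (mul_nonneg (by norm_num) (Real.arccos_nonneg _))]
        field_simp
    _ = (1/π) * ∑ i, arccos ⟪a i, b i⟫ := by rw [Finset.mul_sum]
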